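/- Let C be a set of permutations closed under pattern containment with at most exponential growth (there is c ≥ 1 with at most c^k permutations of length k in C for every k). Then for every ε > 0 and all sufficiently large n there exists a permutation σ of length n such that: σ itself is a common pattern of the pair (σ, σ) of length n (so the longest common pattern of σ and σ has length exactly n), while every common pattern of (σ, σ) that belongs to C has length less than n^{1/2+ε}. In particular, computing a longest common pattern from the class C approximates the longest common pattern of two permutations within no better ratio than roughly the square root of the optimum. -/

import Mathlib

/-- `π` occurs as a pattern in `σ`. -/
def Pattern {k n : ℕ} (π : Equiv.Perm (Fin k)) (σ : Equiv.Perm (Fin n)) : Prop :=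
  ∃ f : Fin k → Fin n, StrictMono f ∧ ∀ ℓ m : Fin k, π ℓ < π m ↔ σ (f ℓ) < σ (f m)

/-- The permutation 2 4 1 3 (one-line notation; zero-indexed values 1 3 0 2). -/
def perm2413 : Equiv.Perm (Fin 4) := c[0, 1, 3, 2]

/-- The permutation 3 1 4 2 (one-line notation; zero-indexed values 2 0 3 1). -/
def perm3142 : Equiv.Perm (Fin 4) := c[0, 2, 3, 1]

/-- A permutation is separable if it avoids both 2413 and 3142. -/
def Separable {n : ℕ} (σ : Equiv.Perm (Fin n)) : Prop :=
  ¬ Pattern perm2413 σ ∧ ¬ Pattern perm3142 σ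

/-- Positive concatenation (direct sum) `π ⊕ π'`:
the word `π₁ ⋯ π_k (π'₁+k) ⋯ (π'_{k'}+k)`. -/
def dsum {k k' : ℕ} (π : Equiv.Perm (Fin k)) (π' : Equiv.Perm (Fin k')) :
    Equiv.Perm (Fin (k + k')) :=
  finSumFinEquiv.symm.trans ((Equiv.sumCongr π π').trans finSumFinEquiv)

/-- Negative concatenation (skew sum) `π ⊖ π'`:
the word `(π₁+k') ⋯ (π_k+k') π'₁ ⋯ π'_{k'}`. -/
def ssum {k k' : ℕ} (π : Equiv.Perm (Fin k)) (π' : Equiv.Perm (Fin k')) :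
    Equiv.Perm (Fin (k + k')) :=
  finSumFinEquiv.symm.trans ((Equiv.sumCongr π π').trans
    ((Equiv.sumComm (Fin k) (Fin k')).trans (finSumFinEquiv.trans (finCongr (Nat.add_comm k' k)))))

/-- `π` has an occurrence in `σ` using the (1-indexed) interval `[i..j]` of indices and
`[a..b]` of values. -/
def OccursIn {k n : ℕ} (π : Equiv.Perm (Fin k)) (σ : Equiv.Perm (Fin n))
    (i j a b : ℕ) : Prop :=
  ∃ f : Fin k → Fin n, StrictMono f ∧
    (∀ ℓ m : Fin k, π ℓ < π m ↔ σ (f ℓ) < σ (f m)) ∧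
    (∀ ℓ : Fin k, i ≤ (f ℓ : ℕ) + 1 ∧ (f ℓ : ℕ) + 1 ≤ j) ∧
    (∀ ℓ : Fin k, a ≤ (σ (f ℓ) : ℕ) + 1 ∧ (σ (f ℓ) : ℕ) + 1 ≤ b)

lemma pattern_refl {n : ℕ} (σ : Equiv.Perm (Fin n)) : Pattern σ σ :=
  ⟨id, strictMono_id, fun _ _ => Iff.rfl⟩

lemma pattern_le {m n : ℕ} {π : Equiv.Perm (Fin m)} {σ : Equiv.Perm (Fin n)}
    (h : Pattern π σ) : m ≤ n := by
  obtain ⟨f, hf, -⟩ := h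
  simpa using Fintype.card_le_of_injective f hf.injective

lemma pattern_trans {k m n : ℕ} {π : Equiv.Perm (Fin k)} {τ : Equiv.Perm (Fin m)}
    {σ : Equiv.Perm (Fin n)} (h1 : Pattern π τ) (h2 : Pattern τ σ) : Pattern π σ := by
  obtain ⟨g, hg, hg2⟩ := h1
  obtain ⟨f, hf, hf2⟩ := h2
  exact ⟨f ∘ g, hf.comp hg, fun ℓ m' => (hg2 ℓ m').trans (hf2 (g ℓ) (g m'))⟩

lemma strictMono_fin_id {t : ℕ} {f : Fin t → Fin t} (hf : StrictMono f) : f = id := by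
  have h1 : f = Finset.univ.orderEmbOfFin (by simp) :=
    Finset.orderEmbOfFin_unique _ (fun x => Finset.mem_univ _) hf
  have h2 : (id : Fin t → Fin t) = Finset.univ.orderEmbOfFin (by simp) :=
    Finset.orderEmbOfFin_unique _ (fun x => Finset.mem_univ _) strictMono_id
  rw [h1, ← h2]

lemma perm_eq_of_iff {t : ℕ} {π ρ : Equiv.Perm (Fin t)}
    (h : ∀ ℓ m, π ℓ < π m ↔ ρ ℓ < ρ m) : ρ = π := by
  have hm : StrictMono (fun i => ρ (π.symm i)) := by
    intro a b hab
    rw [← h]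
    simpa using hab
  have := strictMono_fin_id hm
  apply Equiv.ext
  intro j
  have := congrFun this (π j)
  simpa using this

lemma card_image_sf {t n : ℕ} (σ : Equiv.Perm (Fin n)) {f : Fin t → Fin n}
    (hf : Function.Injective f) :
    (Finset.univ.image (fun i => σ (f i))).card = t := by
  rw [show (fun i => σ (f i)) = ⇑σ ∘ f from rfl,
    Finset.card_image_of_injective _ (σ.injective.comp hf)]
  simp

lemma pattern_extract {t n : ℕ} (σ : Equiv.Perm (Fin n)) (f : Fin t → Fin n)
    (hf : StrictMono f) :
    ∃ π : Equiv.Perm (Fin t), (∀ ℓ m, π ℓ < π m ↔ σ (f ℓ) < σ (f m)) ∧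
      (∀ i, σ (f i) =
        (Finset.univ.image (fun i => σ (f i))).orderEmbOfFin (card_image_sf σ hf.injective) (π i)) := by
  set V := Finset.univ.image (fun i => σ (f i)) with hVdef
  have hV : V.card = t := card_image_sf σ hf.injective
  set g := V.orderIsoOfFin hV with hgdef
  have hmem : ∀ i, σ (f i) ∈ V := fun i => Finset.mem_image.2 ⟨i, Finset.mem_univ _, rfl⟩
  set ρ : Fin t → Fin t := fun i => g.symm ⟨σ (f i), hmem i⟩ with hρdef
  have hinj : Function.Injective ρ := by
    intro i j hij
    have := congrArg g hij
    simp only [hρdef, OrderIso.apply_symm_apply] at this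
    exact hf.injective (σ.injective (Subtype.mk_eq_mk.1 this))
  refine ⟨Equiv.ofBijective ρ (Finite.injective_iff_bijective.mp hinj), ?_, ?_⟩
  · intro ℓ m
    show ρ ℓ < ρ m ↔ _
    rw [← g.lt_iff_lt]
    simp only [hρdef, OrderIso.apply_symm_apply]
    exact Iff.rfl
  · intro i
    show _ = (V.orderEmbOfFin hV) (ρ i)
    have : (V.orderEmbOfFin hV) (ρ i) = (g (ρ i) : Fin n) :=
      (Finset.coe_orderIsoOfFin_apply V hV (ρ i)).symm
    rw [this]
    simp only [hρdef, OrderIso.apply_symm_apply]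

lemma value_formula {t n : ℕ} (σ : Equiv.Perm (Fin n)) {f : Fin t → Fin n} (hf : StrictMono f)
    (π : Equiv.Perm (Fin t)) (hiff : ∀ ℓ m, π ℓ < π m ↔ σ (f ℓ) < σ (f m)) :
    ∀ i, σ (f i) =
      (Finset.univ.image (fun i => σ (f i))).orderEmbOfFin (card_image_sf σ hf.injective) (π i) := by
  obtain ⟨ρ, hρiff, hρval⟩ := pattern_extract σ f hf
  have : ρ = π := perm_eq_of_iff (fun ℓ m => (hiff ℓ m).trans (hρiff ℓ m).symm)
  subst this
  exact hρval

lemma factorial_lower (t : ℕ) : ((t : ℝ) / 3) ^ t ≤ (t.factorial : ℝ) := by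
  induction t with
  | zero => simp
  | succ t ih =>
    rcases Nat.eq_zero_or_pos t with rfl | ht
    · norm_num
    have htR : (1 : ℝ) ≤ t := by exact_mod_cast ht
    have htpos : (0 : ℝ) < t := by linarith
    have key : ((t : ℝ) + 1) ^ t ≤ 3 * (t : ℝ) ^ t := by
      have h1 : (t : ℝ) + 1 ≤ t * Real.exp (1 / t) := by
        have := Real.add_one_le_exp (1 / (t : ℝ))
        calc (t : ℝ) + 1 = t * (1 / t + 1) := by field_simp; ring
        _ ≤ t * Real.exp (1 / t) := by nlinarith [Real.exp_pos (1/(t:ℝ))]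
      calc ((t : ℝ) + 1) ^ t ≤ ((t : ℝ) * Real.exp (1 / t)) ^ t := by
            apply pow_le_pow_left₀ (by positivity) h1 t
      _ = (t : ℝ) ^ t * Real.exp (1 / t) ^ t := mul_pow _ _ _
      _ = (t : ℝ) ^ t * Real.exp 1 := by
            rw [← Real.exp_nat_mul]
            congr 1
            field_simp
      _ ≤ (t : ℝ) ^ t * 3 := by
            have := Real.exp_one_lt_d9
            nlinarith [pow_nonneg (le_of_lt htpos) t]
      _ = 3 * (t : ℝ) ^ t := by ring
    have h3 : (((t : ℕ) + 1 : ℕ) : ℝ) = (t : ℝ) + 1 := by push_cast; ring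
    rw [Nat.factorial_succ]
    push_cast
    calc (((t : ℝ) + 1) / 3) ^ (t + 1) = ((t : ℝ) + 1) / 3 * (((t : ℝ) + 1) ^ t / 3 ^ t) := by
          rw [div_pow]; ring
    _ ≤ ((t : ℝ) + 1) / 3 * (3 * (t : ℝ) ^ t / 3 ^ t) := by
          apply mul_le_mul_of_nonneg_left _ (by positivity)
          apply div_le_div_of_nonneg_right key (by positivity) |>.trans_eq rfl
    _ = ((t : ℝ) + 1) * ((t : ℝ) / 3) ^ t := by rw [div_pow]; field_simp
    _ ≤ ((t : ℝ) + 1) * (t.factorial : ℝ) := by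
          apply mul_le_mul_of_nonneg_left ih (by positivity)

section Count

variable {n t : ℕ}

lemma compl_card {s : Finset (Fin n)} (h : s.card = t) : sᶜ.card = n - t := by
  rw [Finset.card_compl, h]; simp

def Pset (f : Fin t → Fin n) : Finset (Fin n) := Finset.univ.image f

lemma Pset_card {f : Fin t → Fin n} (hf : Function.Injective f) : (Pset f).card = t := by
  rw [Pset, Finset.card_image_of_injective _ hf]; simp

def Vset (σ : Equiv.Perm (Fin n)) (f : Fin t → Fin n) : Finset (Fin n) :=
  Finset.univ.image (fun i => σ (f i))

lemma Vset_card (σ : Equiv.Perm (Fin n)) {f : Fin t → Fin n} (hf : Function.Injective f) :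
    (Vset σ f).card = t := card_image_sf σ hf

lemma sigma_mem_vcompl (σ : Equiv.Perm (Fin n)) (f : Fin t → Fin n)
    {x : Fin n} (hx : x ∈ (Pset f)ᶜ) : σ x ∈ (Vset σ f)ᶜ := by
  rw [Finset.mem_compl] at hx ⊢
  intro hmem
  obtain ⟨i, -, hi⟩ := Finset.mem_image.1 hmem
  exact hx (by rw [← σ.injective hi]; exact Finset.mem_image.2 ⟨i, Finset.mem_univ _, rfl⟩)

def tau0 (σ : Equiv.Perm (Fin n)) (f : Fin t → Fin n) (hf : Function.Injective f) :
    Fin (n - t) → Fin (n - t) :=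
  fun j => ((Vset σ f)ᶜ.orderIsoOfFin (compl_card (Vset_card σ hf))).symm
    ⟨σ ↑((Pset f)ᶜ.orderIsoOfFin (compl_card (Pset_card hf)) j),
     sigma_mem_vcompl σ f ((Pset f)ᶜ.orderIsoOfFin (compl_card (Pset_card hf)) j).2⟩

lemma tau0_inj (σ : Equiv.Perm (Fin n)) (f : Fin t → Fin n) (hf : Function.Injective f) :
    Function.Injective (tau0 σ f hf) := by
  intro a b hab
  have := congrArg ((Vset σ f)ᶜ.orderIsoOfFin (compl_card (Vset_card σ hf))) hab
  simp only [tau0, OrderIso.apply_symm_apply, Subtype.mk.injEq] at this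
  have h2 := σ.injective this
  have h3 := Subtype.ext h2 (p := fun x => x ∈ (Pset f)ᶜ)
  exact ((Pset f)ᶜ.orderIsoOfFin (compl_card (Pset_card hf))).injective h3

noncomputable def tauOf (σ : Equiv.Perm (Fin n)) (f : Fin t → Fin n) (hf : Function.Injective f) :
    Equiv.Perm (Fin (n - t)) :=
  Equiv.ofBijective _ (Finite.injective_iff_bijective.1 (tau0_inj σ f hf))

lemma emb_symm {α : Type*} [LinearOrder α] (s : Finset α) {k : ℕ} (h : s.card = k) (y : ↥s) :
    s.orderEmbOfFin h ((s.orderIsoOfFin h).symm y) = ↑y := by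
  rw [← Finset.coe_orderIsoOfFin_apply, OrderIso.apply_symm_apply]

def recon (π : Equiv.Perm (Fin t)) (P V : {s : Finset (Fin n) // s.card = t})
    (τ : Equiv.Perm (Fin (n - t))) (x : Fin n) : Fin n :=
  if hx : x ∈ P.1 then V.1.orderEmbOfFin V.2 (π ((P.1.orderIsoOfFin P.2).symm ⟨x, hx⟩))
  else (V.1ᶜ).orderEmbOfFin (compl_card V.2)
    (τ ((P.1ᶜ.orderIsoOfFin (compl_card P.2)).symm ⟨x, Finset.mem_compl.2 hx⟩))

lemma recon_spec (σ : Equiv.Perm (Fin n)) (π : Equiv.Perm (Fin t))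
    (f : Fin t → Fin n) (hf : StrictMono f)
    (hiff : ∀ ℓ m, π ℓ < π m ↔ σ (f ℓ) < σ (f m)) (x : Fin n) :
    recon π ⟨Pset f, Pset_card hf.injective⟩ ⟨Vset σ f, Vset_card σ hf.injective⟩
      (tauOf σ f hf.injective) x = σ x := by
  rw [recon]
  split_ifs with hx
  · -- x in the position set
    set i := ((Pset f).orderIsoOfFin (Pset_card hf.injective)).symm ⟨x, hx⟩ with hidef
    have hfeq : f = (Pset f).orderEmbOfFin (Pset_card hf.injective) :=
      Finset.orderEmbOfFin_unique _ (fun y => Finset.mem_image.2 ⟨y, Finset.mem_univ _, rfl⟩) hf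
    have hfi : f i = x := by
      rw [hfeq]
      have : (Pset f).orderEmbOfFin (Pset_card hf.injective) i
          = ↑((Pset f).orderIsoOfFin (Pset_card hf.injective) i) :=
        (Finset.coe_orderIsoOfFin_apply _ _ i).symm
      rw [this, hidef, OrderIso.apply_symm_apply]
    rw [← hfi]
    exact (value_formula σ hf π hiff i).symm
  · -- x in the complement
    set j := ((Pset f)ᶜ.orderIsoOfFin (compl_card (Pset_card hf.injective))).symm
      ⟨x, Finset.mem_compl.2 hx⟩ with hjdef
    have htau : tauOf σ f hf.injective j = tau0 σ f hf.injective j := rfl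
    rw [htau, tau0, emb_symm]
    show σ ↑((Pset f)ᶜ.orderIsoOfFin (compl_card (Pset_card hf.injective)) j) = σ x
    have hpj : (((Pset f)ᶜ.orderIsoOfFin (compl_card (Pset_card hf.injective)) j : _) : Fin n)
        = x := by rw [hjdef, OrderIso.apply_symm_apply]
    rw [hpj]

end Count

lemma counting {n t : ℕ} (S : Equiv.Perm (Fin t) → Prop)
    (hcard : Nat.card {π : Equiv.Perm (Fin t) // S π} *
      (n.choose t * (n.choose t * (n - t).factorial)) < n.factorial) :
    ∃ σ : Equiv.Perm (Fin n), ∀ π : Equiv.Perm (Fin t), S π → ¬ Pattern π σ := by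
  classical
  by_contra hcon
  push_neg at hcon
  choose π hS hpat using hcon
  choose f hf hiff using hpat
  let Φ : Equiv.Perm (Fin n) → {π : Equiv.Perm (Fin t) // S π} ×
      {s : Finset (Fin n) // s.card = t} × ({s : Finset (Fin n) // s.card = t} ×
      Equiv.Perm (Fin (n - t))) :=
    fun σ => (⟨π σ, hS σ⟩, ⟨Pset (f σ), Pset_card (hf σ).injective⟩,
      ⟨Vset σ (f σ), Vset_card σ (hf σ).injective⟩, tauOf σ (f σ) (hf σ).injective)
  have hinj : Function.Injective Φ := by
    intro σ σ' h
    simp only [Φ, Prod.mk.injEq, Subtype.mk.injEq] at h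
    obtain ⟨h1, h2, h3, h4⟩ := h
    apply Equiv.coe_fn_injective
    funext x
    show σ x = σ' x
    have e1 := recon_spec σ (π σ) (f σ) (hf σ) (hiff σ) x
    have e2 := recon_spec σ' (π σ') (f σ') (hf σ') (hiff σ') x
    rw [← e1, ← e2, h1,
      (Subtype.ext h2 : (⟨Pset (f σ), Pset_card (hf σ).injective⟩ :
        {s : Finset (Fin n) // s.card = t}) = ⟨Pset (f σ'), Pset_card (hf σ').injective⟩),
      (Subtype.ext h3 : (⟨Vset σ (f σ), Vset_card σ (hf σ).injective⟩ :
        {s : Finset (Fin n) // s.card = t}) = ⟨Vset σ' (f σ'), Vset_card σ' (hf σ').injective⟩),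
      h4]
  have hle := Nat.card_le_card_of_injective Φ hinj
  have hA : Nat.card (Equiv.Perm (Fin n)) = n.factorial := by
    rw [Nat.card_eq_fintype_card, Fintype.card_perm, Fintype.card_fin]
  have hB : Nat.card {s : Finset (Fin n) // s.card = t} = n.choose t := by
    rw [Nat.card_eq_fintype_card, Fintype.card_finset_len, Fintype.card_fin]
  have hD : Nat.card (Equiv.Perm (Fin (n - t))) = (n - t).factorial := by
    rw [Nat.card_eq_fintype_card, Fintype.card_perm, Fintype.card_fin]
  rw [Nat.card_prod, Nat.card_prod, Nat.card_prod, hA, hB, hD] at hle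
  omega

lemma numeric {n t : ℕ} (c : ℝ) (hc : 1 ≤ c) (K : ℕ) (hK : (K : ℝ) ≤ c ^ t)
    (ht : 1 ≤ t) (htn : t ≤ n) (hbig : 9 * (c * n) < (t : ℝ) ^ 2) :
    K * (n.choose t * (n.choose t * (n - t).factorial)) < n.factorial := by
  have hc0 : (0:ℝ) < c := lt_of_lt_of_le one_pos hc
  have hfact : n.choose t * t.factorial * (n - t).factorial = n.factorial :=
    Nat.choose_mul_factorial_mul_factorial htn
  have hftpos : (0:ℝ) < (t.factorial : ℝ) := by positivity
  -- choose * t! ≤ n ^ t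
  have h1n : t.factorial * n.choose t ≤ n ^ t := by
    rw [← Nat.descFactorial_eq_factorial_mul_choose]; exact Nat.descFactorial_le_pow n t
  have h1 : (n.choose t : ℝ) * (t.factorial : ℝ) ≤ (n : ℝ) ^ t := by
    have h := h1n
    rw [mul_comm] at h
    exact_mod_cast h
  -- (c*n)^t < (t!)^2
  have h2 : (c * (n : ℝ)) ^ t < ((t.factorial : ℝ)) ^ 2 := by
    have hcn : c * (n : ℝ) < ((t : ℝ) / 3) ^ 2 := by
      rw [div_pow]; norm_num; linarith
    calc (c * (n : ℝ)) ^ t < (((t : ℝ) / 3) ^ 2) ^ t := by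
          apply pow_lt_pow_left₀ hcn (by positivity) (by omega)
    _ = (((t : ℝ) / 3) ^ t) ^ 2 := by rw [← pow_mul, mul_comm, pow_mul]
    _ ≤ ((t.factorial : ℝ)) ^ 2 := by
          apply pow_le_pow_left₀ (by positivity) (factorial_lower t)
  -- key : K * choose < t!
  have key : (K : ℝ) * (n.choose t : ℝ) < (t.factorial : ℝ) := by
    have hA : (K : ℝ) * (n.choose t : ℝ) * (t.factorial : ℝ) ≤ (c * (n:ℝ)) ^ t := by
      calc (K : ℝ) * (n.choose t : ℝ) * (t.factorial : ℝ)
          ≤ c ^ t * ((n.choose t : ℝ) * (t.factorial : ℝ)) := by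
            rw [mul_assoc]
            apply mul_le_mul_of_nonneg_right hK (by positivity)
      _ ≤ c ^ t * (n : ℝ) ^ t := by
            apply mul_le_mul_of_nonneg_left h1 (by positivity)
      _ = (c * (n:ℝ)) ^ t := (mul_pow _ _ _).symm
    have := lt_of_le_of_lt hA h2
    rw [pow_two] at this
    exact lt_of_mul_lt_mul_right this hftpos.le
  have hchoosepos : (0:ℝ) < (n.choose t : ℝ) * ((n - t).factorial : ℝ) := by
    have := Nat.choose_pos htn
    have : (0:ℝ) < (n.choose t : ℝ) := by exact_mod_cast this
    positivity
  have hlt : ((K * (n.choose t * (n.choose t * (n - t).factorial)) : ℕ) : ℝ)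
      < ((n.factorial : ℕ) : ℝ) := by
    calc ((K * (n.choose t * (n.choose t * (n - t).factorial)) : ℕ) : ℝ)
        = ((K : ℝ) * (n.choose t : ℝ)) * ((n.choose t : ℝ) * ((n - t).factorial : ℝ)) := by
          push_cast; ring
    _ < (t.factorial : ℝ) * ((n.choose t : ℝ) * ((n - t).factorial : ℝ)) :=
          mul_lt_mul_of_pos_right key hchoosepos
    _ = ((n.factorial : ℕ) : ℝ) := by rw [← hfact]; push_cast; ring
  exact_mod_cast hlt

/-- Inapproximability: for a class `C` closed under pattern containment with at most
exponential growth, for every `ε > 0` and all sufficiently large `n` there is a permutation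
`σ` of length `n` which is a common pattern of the pair `(σ, σ)` of (maximal) length `n`,
while every common pattern of `(σ, σ)` belonging to `C` has length less than `n^(1/2+ε)`. -/
theorem longest_common_C_pattern_inapprox
    (C : ∀ {m : ℕ}, Equiv.Perm (Fin m) → Prop)
    (hclosed : ∀ {m m' : ℕ} (π : Equiv.Perm (Fin m)) (τ : Equiv.Perm (Fin m')),
      C τ → Pattern π τ → C π)
    (c : ℝ) (hc : 1 ≤ c)
    (hgrowth : ∀ m : ℕ, (Nat.card {π : Equiv.Perm (Fin m) // C π} : ℝ) ≤ c ^ m) :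
    ∀ ε : ℝ, 0 < ε → ∃ N : ℕ, ∀ n ≥ N, ∃ σ : Equiv.Perm (Fin n),
      (Pattern σ σ ∧ Pattern σ σ) ∧
      (∀ (m : ℕ) (π : Equiv.Perm (Fin m)), Pattern π σ ∧ Pattern π σ → m ≤ n) ∧
      (∀ (m : ℕ) (π : Equiv.Perm (Fin m)), C π → Pattern π σ ∧ Pattern π σ →
        (m : ℝ) < (n : ℝ) ^ ((1 : ℝ) / 2 + ε)) := by
  intro ε hε
  set δ := min ε (1/4 : ℝ) with hδdef
  have hδpos : 0 < δ := lt_min hε (by norm_num)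
  have hδ14 : δ ≤ 1/4 := min_le_right _ _
  have hδε : δ ≤ ε := min_le_left _ _
  have htend : Filter.Tendsto (fun n : ℕ => (n : ℝ) ^ (2 * δ)) Filter.atTop Filter.atTop :=
    (tendsto_rpow_atTop (by linarith)).comp tendsto_natCast_atTop_atTop
  obtain ⟨N0, hN0⟩ := Filter.eventually_atTop.1 (htend.eventually_ge_atTop (9 * c + 1))
  refine ⟨max N0 1, fun n hn => ?_⟩
  have hn1 : 1 ≤ n := le_trans (le_max_right _ _) hn
  have hnR1 : (1:ℝ) ≤ (n:ℝ) := by exact_mod_cast hn1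
  have hn0 : (0:ℝ) < (n:ℝ) := by linarith
  have hN0n : 9 * c + 1 ≤ (n:ℝ) ^ (2*δ) := hN0 n (le_trans (le_max_left _ _) hn)
  set x := (n : ℝ) ^ ((1:ℝ)/2 + δ) with hxdef
  have hx1 : 1 ≤ x := Real.one_le_rpow hnR1 (by linarith)
  set t := ⌈x⌉₊ with htdef
  have ht1 : 1 ≤ t := Nat.one_le_ceil_iff.2 (by linarith)
  have hxle : x ≤ (n : ℝ) := by
    calc x ≤ (n:ℝ) ^ (1:ℝ) := Real.rpow_le_rpow_of_exponent_le hnR1 (by linarith)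
    _ = (n:ℝ) := Real.rpow_one _
  have htn : t ≤ n := Nat.ceil_le.2 hxle
  have htx : x ≤ (t : ℝ) := Nat.le_ceil x
  have hbig : 9 * (c * (n:ℝ)) < (t : ℝ) ^ 2 := by
    have hx2 : x ^ 2 = (n:ℝ) ^ ((1:ℝ) + 2*δ) := by
      rw [hxdef, ← Real.rpow_natCast ((n:ℝ) ^ ((1:ℝ)/2+δ)) 2, ← Real.rpow_mul (le_of_lt hn0)]
      norm_num
      ring_nf
    have h9 : 9 * (c * (n:ℝ)) < (n:ℝ) ^ ((1:ℝ)+2*δ) := by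
      rw [Real.rpow_add hn0, Real.rpow_one]
      have h9c : 9*c < (n:ℝ)^(2*δ) := by linarith
      calc 9*(c*(n:ℝ)) = (9*c)*(n:ℝ) := by ring
      _ < (n:ℝ)^(2*δ) * (n:ℝ) := mul_lt_mul_of_pos_right h9c hn0
      _ = (n:ℝ) * (n:ℝ)^(2*δ) := by ring
    have hx2t : x^2 ≤ (t:ℝ)^2 := pow_le_pow_left₀ (by positivity) htx 2
    rw [hx2] at hx2t
    linarith
  obtain ⟨σ, hσ⟩ := counting (fun π : Equiv.Perm (Fin t) => C π)
    (numeric c hc _ (hgrowth t) ht1 htn hbig)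
  refine ⟨σ, ⟨pattern_refl σ, pattern_refl σ⟩, ?_, ?_⟩
  · intro m πm hm; exact pattern_le hm.1
  · intro m πm hCm hm
    have hmlt : m < t := by
      by_contra hge
      push_neg at hge
      obtain ⟨ρ, hρiff, -⟩ := pattern_extract πm (Fin.castLE hge) (Fin.strictMono_castLE hge)
      have hρpat : Pattern ρ πm := ⟨Fin.castLE hge, Fin.strictMono_castLE hge, hρiff⟩
      exact hσ ρ (hclosed ρ πm hCm hρpat) (pattern_trans hρpat hm.1)
    have h1 : (m:ℝ) + 1 ≤ (t:ℝ) := by exact_mod_cast hmlt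
    have h2 : (t:ℝ) < x + 1 := Nat.ceil_lt_add_one (by linarith)
    have h3 : x ≤ (n:ℝ) ^ ((1:ℝ)/2 + ε) := Real.rpow_le_rpow_of_exponent_le hnR1 (by linarith)
    linarith
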